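/- Let K be a field and a, b, c, x, y ∈ K with x ≠ 0, y ≠ 0, and y^2 ≠ a. Set W(x,y) = y + a/y + b*y*(y^2 + a)/(y^2 - a)^2 + (c/(x*y^2) + c*x/y^2)*(1 - a/y^2)^{-2}. Then y + a/y + b*y*(y^2 + a)/(y^2 - a)^2 + c/(x*y^2) + (c*x/y^2)*(1 - a/y^2)^{-4} = W(x*(1 - a/y^2)^{-2}, y). -/

import Mathlib

/-- The F₄ superpotential `W(x,y)` from equation (3.1) of the paper, with
    `a = T^A`, `b = T^B`, `c = T^{A/2+B}` abstract field elements. -/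
def Wpot {K : Type*} [Field K] (a b c x y : K) : K :=
  y + a/y + b*y*(y^2 + a)/(y^2 - a)^2 + (c/(x*y^2) + c*x/y^2) * ((1 - a/y^2)^2)⁻¹

theorem stmt_9 {K : Type*} [Field K] (a b c x y : K)
    (hx : x ≠ 0) (hy : y ≠ 0) (hya : y^2 ≠ a) :
    y + a/y + b*y*(y^2 + a)/(y^2 - a)^2 + c/(x*y^2)
      + (c*x/y^2) * ((1 - a/y^2)^4)⁻¹
    = Wpot a b c (x * ((1 - a/y^2)^2)⁻¹) y := by
  have hy2 : y^2 ≠ 0 := pow_ne_zero 2 hy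
  have h2 : y^2 - a ≠ 0 := sub_ne_zero.mpr hya
  have hd : (1 : K) - a/y^2 ≠ 0 := by
    rw [sub_ne_zero]
    intro h
    apply hya
    field_simp at h
    exact h
  rw [Wpot]
  generalize (1 : K) - a/y^2 = d at hd ⊢
  have key : c/(x*y^2) + (c*x/y^2) * (d^4)⁻¹
      = (c/(x * (d^2)⁻¹ * y^2) + c*(x * (d^2)⁻¹)/y^2) * ((d^2))⁻¹ := by
    field_simp
  linear_combination key
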